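/- arXiv:1112.6142 — 2 statements merged into one kernel-verified Lean document; each statement's English description precedes it below -/
import Mathlib

section
/- For every real number α, the infimum over all positive integers n of ‖F_n α‖ is at most (φ−1)/(φ+2). -/
/-- Distance from a real number to the nearest integer. -/
noncomputable def distNearestInt (x : ℝ) : ℝ := |x - round x|

/-- The golden ratio. -/
noncomputable def φ : ℝ := (1 + Real.sqrt 5) / 2

private lemma distNearestInt_le (x : ℝ) (m : ℤ) : distNearestInt x ≤ |x - m| :=
  round_le x m

/-- auxiliary sequences: AB j = (F (4j+6), F (4j+7)) -/
private def AB : ℕ → ℕ × ℕ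
  | 0 => (8, 13)
  | j+1 => (3 * (AB j).2 + 2 * (AB j).1, 5 * (AB j).2 + 3 * (AB j).1)

private def MM : ℕ → ℕ
  | 0 => 2
  | j+1 => MM j + (AB j).2

private lemma AB_succ_1 (j : ℕ) : (AB (j+1)).1 = 3 * (AB j).2 + 2 * (AB j).1 := rfl
private lemma AB_succ_2 (j : ℕ) : (AB (j+1)).2 = 5 * (AB j).2 + 3 * (AB j).1 := rfl
private lemma MM_succ (j : ℕ) : MM (j+1) = MM j + (AB j).2 := rfl

private lemma fib_add_four (k : ℕ) :
    Nat.fib (k+4) = 3 * Nat.fib (k+1) + 2 * Nat.fib k := by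
  have h0 : Nat.fib (k+2) = Nat.fib k + Nat.fib (k+1) := Nat.fib_add_two
  have h1 : Nat.fib (k+3) = Nat.fib (k+1) + Nat.fib (k+2) := Nat.fib_add_two (n := k+1)
  have h2 : Nat.fib (k+4) = Nat.fib (k+2) + Nat.fib (k+3) := Nat.fib_add_two (n := k+2)
  omega

private lemma fib_add_five (k : ℕ) :
    Nat.fib (k+5) = 5 * Nat.fib (k+1) + 3 * Nat.fib k := by
  have h0 := fib_add_four k
  have h1 : Nat.fib (k+5) = Nat.fib (k+3) + Nat.fib (k+4) := Nat.fib_add_two (n := k+3)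
  have h2 : Nat.fib (k+3) = Nat.fib (k+1) + Nat.fib (k+2) := Nat.fib_add_two (n := k+1)
  have h3 : Nat.fib (k+2) = Nat.fib k + Nat.fib (k+1) := Nat.fib_add_two
  omega

private lemma AB_fib (j : ℕ) :
    (AB j).1 = Nat.fib (4*j+6) ∧ (AB j).2 = Nat.fib (4*j+7) := by
  induction j with
  | zero => constructor <;> rfl
  | succ j ih =>
      obtain ⟨h1, h2⟩ := ih
      have e4 : Nat.fib (4*j+6+4) = 3 * Nat.fib (4*j+7) + 2 * Nat.fib (4*j+6) :=
        fib_add_four (4*j+6)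
      have e5 : Nat.fib (4*j+6+5) = 5 * Nat.fib (4*j+7) + 3 * Nat.fib (4*j+6) :=
        fib_add_five (4*j+6)
      have i1 : 4*(j+1)+6 = 4*j+6+4 := by omega
      have i2 : 4*(j+1)+7 = 4*j+6+5 := by omega
      rw [AB_succ_1, AB_succ_2, h1, h2, i1, i2, e4, e5]
      exact ⟨rfl, rfl⟩

private lemma AB_ge (j : ℕ) : 8 ≤ (AB j).1 ∧ (AB j).1 ≤ (AB j).2 ∧ j + 8 ≤ (AB j).1 := by
  induction j with
  | zero => refine ⟨le_refl _, by norm_num [AB], le_refl _⟩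
  | succ j ih =>
      rw [AB_succ_1, AB_succ_2]
      omega

private lemma AB_inv (j : ℕ) :
    ((AB j).2 : ℤ)^2 = (AB j).1 * (AB j).2 + ((AB j).1)^2 + 1 := by
  induction j with
  | zero => norm_num [AB]
  | succ j ih =>
      rw [AB_succ_1, AB_succ_2]
      push_cast
      push_cast at ih
      linear_combination ih

private lemma AB_key (j : ℕ) : 13 * (AB j).2 + 63 ≤ 29 * (AB j).1 := by
  induction j with
  | zero => norm_num [AB]
  | succ j ih =>
      have h := (AB_ge j).1
      have h2 := (AB_ge j).2.1
      rw [AB_succ_1, AB_succ_2]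
      omega

private lemma MM_eq (j : ℕ) : (5 * MM j : ℤ) = 3 * (AB j).1 - (AB j).2 - 1 := by
  induction j with
  | zero => norm_num [AB, MM]
  | succ j ih =>
      rw [MM_succ, AB_succ_1, AB_succ_2]
      push_cast
      push_cast at ih
      linarith

private lemma step_arith (β t s a b m : ℝ) (hs2 : s^2 = 5) (hslb : 2.23 ≤ s)
    (ht : (3*s-5)/10 < t)
    (ha8 : 8 ≤ a) (hab : a ≤ b) (hinv : b^2 = a*b + a^2 + 1) (hkey : 13*b + 63 ≤ 29*a)
    (hmeq : 5*m = 3*a - b - 1) (ih : m + t ≤ a*β)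
    (Habs : t ≤ |(3*b+2*a)*β - (m+b)|) : (m + b) + t ≤ (3*b+2*a)*β := by
  have hgt : (3*b + 2*a) * β - (m + b) > -t := by
    have hc63 : (10:ℝ)/63 < t := by nlinarith
    have hprod : (3*b + 2*a) * (a * β) ≥ (3*b + 2*a) * (m + t) :=
      mul_le_mul_of_nonneg_left ih (by linarith)
    nlinarith [hprod, hc63, hkey, hmeq, hinv, ha8, hab]
  rcases le_abs.mp Habs with h' | h'
  · linarith
  · exfalso; linarith

private lemma final_arith (β t s a b m : ℝ) (hs2 : s^2 = 5) (hslb : 2.23 ≤ s)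
    (ha8 : 8 ≤ a) (hab : a ≤ b) (hinv : b^2 = a*b + a^2 + 1)
    (hmeq : 5*m = 3*a - b - 1) (hPj : m + t ≤ a*β) (hub : 3*β ≤ 1 - t) :
    (t - (3*s-5)/10) * (a + 3) ≤ 1 := by
  have hsa : (2.23:ℝ)*8 ≤ s*a := mul_le_mul hslb ha8 (by norm_num) (by linarith)
  have hsqb : 2*b - a ≤ s*a + 1 := by
    by_contra hcon
    push_neg at hcon
    have h1 : (0:ℝ) < s*a + 1 := by linarith
    have h2 : (s*a+1)^2 < (2*b-a)^2 := by nlinarith [hcon, h1]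
    have e1 : (s*a+1)^2 = 5*a^2 + 2*(s*a) + 1 := by linear_combination a^2 * hs2
    have e2 : (2*b-a)^2 = 5*a^2 + 4 := by linear_combination 4*hinv
    rw [e1, e2] at h2
    linarith
  have hta : 5*t*(a+3) ≤ 3*b - 4*a + 3 := by
    have h := mul_le_mul_of_nonneg_left hub (show (0:ℝ) ≤ a by linarith)
    nlinarith [hPj, hmeq, h]
  nlinarith [hta, hsqb, hslb, ha8]

private lemma main_aux (β t : ℝ) (hβ0 : 0 ≤ β) (hβh : β ≤ 1/2)
    (ht : (3 * Real.sqrt 5 - 5) / 10 < t)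
    (H : ∀ k : ℕ, 1 ≤ k → ∀ m : ℤ, t ≤ |(Nat.fib k : ℝ) * β - m|) : False := by
  have hs2 : (Real.sqrt 5)^2 = 5 := Real.sq_sqrt (by norm_num)
  have hs0 : (0:ℝ) ≤ Real.sqrt 5 := Real.sqrt_nonneg 5
  have hslb : (2.23:ℝ) ≤ Real.sqrt 5 := by nlinarith
  set s := Real.sqrt 5 with hs
  have ht6 : (1:ℝ)/6 < t := by nlinarith
  -- base constraints
  have h1 : t ≤ β := by
    have h := H 1 (by norm_num) 0
    have e : Nat.fib 1 = 1 := rfl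
    rw [e] at h; push_cast at h
    rwa [one_mul, sub_zero, abs_of_nonneg hβ0] at h
  have h3 : 2*β ≤ 1 - t := by
    have h := H 3 (by norm_num) 1
    have e : Nat.fib 3 = 2 := rfl
    rw [e] at h; push_cast at h
    rcases le_abs.mp h with h' | h' <;> linarith
  have hub : 3*β ≤ 1 - t := by
    have h4 := H 4 (by norm_num) 1
    have e : Nat.fib 4 = 3 := rfl
    rw [e] at h4; push_cast at h4
    rcases le_abs.mp h4 with h' | h'
    · exfalso
      have h5 := H 5 (by norm_num) 2
      have e5 : Nat.fib 5 = 5 := rfl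
      rw [e5] at h5; push_cast at h5
      rcases le_abs.mp h5 with h'' | h'' <;> linarith
    · linarith
  have h5low : 1 + t ≤ 5*β := by
    have h5 := H 5 (by norm_num) 1
    have e5 : Nat.fib 5 = 5 := rfl
    rw [e5] at h5; push_cast at h5
    rcases le_abs.mp h5 with h' | h' <;> linarith
  have hlow0 : (2:ℝ) + t ≤ 8*β := by
    have h6 := H 6 (by norm_num) 2
    have e6 : Nat.fib 6 = 8 := rfl
    rw [e6] at h6; push_cast at h6
    rcases le_abs.mp h6 with h' | h' <;> linarith
  -- main induction
  have P : ∀ j : ℕ, (MM j : ℝ) + t ≤ ((AB j).1 : ℝ) * β := by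
    intro j
    induction j with
    | zero =>
        have e1 : (MM 0 : ℝ) = 2 := by norm_num [MM]
        have e2 : ((AB 0).1 : ℝ) = 8 := by norm_num [AB]
        rw [e1, e2]; linarith
    | succ j ih =>
        have ha8 : (8:ℝ) ≤ ((AB j).1 : ℝ) := by exact_mod_cast (AB_ge j).1
        have hab : ((AB j).1 : ℝ) ≤ ((AB j).2 : ℝ) := by exact_mod_cast (AB_ge j).2.1
        have hinv : ((AB j).2 : ℝ)^2 = ((AB j).1 : ℝ) * ((AB j).2 : ℝ) + ((AB j).1 : ℝ)^2 + 1 := by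
          exact_mod_cast AB_inv j
        have hkey : 13*((AB j).2 : ℝ) + 63 ≤ 29*((AB j).1 : ℝ) := by
          exact_mod_cast AB_key j
        have hmeq : 5*((MM j : ℝ)) = 3*((AB j).1 : ℝ) - ((AB j).2 : ℝ) - 1 := by
          exact_mod_cast MM_eq j
        have ha' : ((AB (j+1)).1 : ℝ) = 3*((AB j).2 : ℝ) + 2*((AB j).1 : ℝ) := by
          rw [AB_succ_1]; push_cast; ring
        have hm' : ((MM (j+1)) : ℝ) = (MM j : ℝ) + ((AB j).2 : ℝ) := by
          rw [MM_succ]; push_cast; ring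
        have Habs : t ≤ |((AB (j+1)).1 : ℝ) * β - ((MM (j+1) : ℤ) : ℝ)| := by
          have hf := (AB_fib (j+1)).1
          have h := H (4*(j+1)+6) (by omega) (MM (j+1))
          rwa [← hf] at h
        rw [Int.cast_natCast, ha', hm'] at Habs
        rw [ha', hm']
        exact step_arith β t s ((AB j).1 : ℝ) ((AB j).2 : ℝ) (MM j : ℝ)
          hs2 hslb ht ha8 hab hinv hkey hmeq ih Habs
  -- every j gives (t - c)*(j+8) ≤ 1
  have final : ∀ j : ℕ, (t - (3*s-5)/10) * ((j:ℝ) + 8) ≤ 1 := by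
    intro j
    have ha8 : (8:ℝ) ≤ ((AB j).1 : ℝ) := by exact_mod_cast (AB_ge j).1
    have haj : (j:ℝ) + 8 ≤ ((AB j).1 : ℝ) := by exact_mod_cast (AB_ge j).2.2
    have hab : ((AB j).1 : ℝ) ≤ ((AB j).2 : ℝ) := by exact_mod_cast (AB_ge j).2.1
    have hinv : ((AB j).2 : ℝ)^2 = ((AB j).1 : ℝ) * ((AB j).2 : ℝ) + ((AB j).1 : ℝ)^2 + 1 := by
      exact_mod_cast AB_inv j
    have hmeq : 5*((MM j : ℝ)) = 3*((AB j).1 : ℝ) - ((AB j).2 : ℝ) - 1 := by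
      exact_mod_cast MM_eq j
    have h := final_arith β t s ((AB j).1 : ℝ) ((AB j).2 : ℝ) (MM j : ℝ)
      hs2 hslb ha8 hab hinv hmeq (P j) hub
    have htc : 0 < t - (3*s-5)/10 := by linarith
    nlinarith [h, haj, htc]
  obtain ⟨n, hn⟩ := exists_nat_gt (1/(t - (3*s-5)/10))
  have htc : 0 < t - (3*s-5)/10 := by linarith
  have h2 : (1:ℝ)/(t-(3*s-5)/10) < (n:ℝ) + 8 := by linarith
  have h3 := mul_lt_mul_of_pos_left h2 htc
  rw [mul_one_div, div_self (ne_of_gt htc)] at h3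
  linarith [final n]

theorem inf_fib_dist_le (α : ℝ) :
    ⨅ n : ℕ+, distNearestInt ((Nat.fib n : ℝ) * α) ≤ (φ - 1) / (φ + 2) := by
  by_contra hcon
  push_neg at hcon
  have hs2 : (Real.sqrt 5)^2 = 5 := Real.sq_sqrt (by norm_num)
  have hs0 : (0:ℝ) ≤ Real.sqrt 5 := Real.sqrt_nonneg 5
  have hphi : (φ - 1) / (φ + 2) = (3 * Real.sqrt 5 - 5) / 10 := by
    have h2 : (0:ℝ) < φ + 2 := by unfold φ; nlinarith
    rw [div_eq_div_iff (ne_of_gt h2) (by norm_num : (10:ℝ) ≠ 0)]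
    unfold φ
    linear_combination (-3/2) * hs2
  rw [hphi] at hcon
  set t := ⨅ n : ℕ+, distNearestInt ((Nat.fib n : ℝ) * α) with hT
  have hbdd : BddBelow (Set.range fun n : ℕ+ => distNearestInt ((Nat.fib n : ℝ) * α)) := by
    refine ⟨0, ?_⟩
    rintro x ⟨n, rfl⟩
    exact abs_nonneg _
  have hle : ∀ n : ℕ+, t ≤ distNearestInt ((Nat.fib n : ℝ) * α) := fun n => ciInf_le hbdd n
  set r : ℝ := α - (round α : ℝ) with hr
  refine main_aux |r| t (abs_nonneg r) (abs_sub_round α) hcon ?_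
  intro k hk m
  have h := hle ⟨k, hk⟩
  simp only [PNat.mk_coe] at h
  rcases abs_cases r with ⟨he, _⟩ | ⟨he, _⟩
  · have e : (Nat.fib k : ℝ) * |r| - m
        = (Nat.fib k : ℝ) * α - (((Nat.fib k : ℤ) * round α + m : ℤ) : ℝ) := by
      rw [he, hr]; push_cast; ring
    rw [e]
    exact h.trans (distNearestInt_le _ _)
  · have e : (Nat.fib k : ℝ) * |r| - m
        = -((Nat.fib k : ℝ) * α - (((Nat.fib k : ℤ) * round α - m : ℤ) : ℝ)) := by
      rw [he, hr]; push_cast; ring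
    rw [e, abs_neg]
    exact h.trans (distNearestInt_le _ _)
end

section
/- For every integer t ≥ 1 the following exact identities hold: T_{4t} − F_{4t}/(φ+2) = 1/5 + (1−φ)^{4t−1}/(√5·(φ+2)); T_{4t+1} − F_{4t+1}/(φ+2) = −2/5 + (2−φ)(1−φ)^{4t−2}/(√5·(φ+2)); T_{4t+2} − F_{4t+2}/(φ+2) = −1/5 + (3−2φ)(1−φ)^{4t−2}/(√5·(φ+2)); and T_{4t+3} − F_{4t+3}/(φ+2) = 2/5 + (5−3φ)(1−φ)^{4t−2}/(√5·(φ+2)). -/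
/-- `T n = Σ_{k=1}^{⌊n/2⌋} (−1)^{k+1} F_{n−2k}`. -/
def T (n : ℕ) : ℤ := ∑ k ∈ Finset.Icc 1 (n / 2), (-1 : ℤ) ^ (k + 1) * (Nat.fib (n - 2 * k) : ℤ)

lemma T_range (n : ℕ) : T n = ∑ i ∈ Finset.range (n / 2), (-1 : ℤ) ^ i * (Nat.fib (n - 2 - 2 * i) : ℤ) := by
  rw [T, ← Finset.Ico_add_one_right_eq_Icc, Finset.sum_Ico_eq_sum_range]
  apply Finset.sum_congr (by norm_num)
  intro i _
  have h1 : (-1 : ℤ) ^ (1 + i + 1) = (-1) ^ i := by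
    rw [show 1 + i + 1 = i + 2 by omega, pow_add]; ring
  rw [h1, show n - 2 * (1 + i) = n - 2 - 2 * i from by omega]

lemma Trec (n : ℕ) : T (n + 2) = (Nat.fib n : ℤ) - T n := by
  rw [T_range, T_range, show (n+2)/2 = n/2 + 1 by omega, Finset.sum_range_succ']
  simp only [pow_zero, one_mul, Nat.mul_zero]
  have : ∀ i, (-1 : ℤ) ^ (i + 1) * (Nat.fib (n + 2 - 2 - 2 * (i+1)) : ℤ)
      = -((-1 : ℤ) ^ i * (Nat.fib (n - 2 - 2 * i) : ℤ)) := by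
    intro i
    rw [show n + 2 - 2 - 2 * (i+1) = n - 2 - 2*i by omega, pow_succ]
    ring
  rw [Finset.sum_congr rfl (fun i _ => this i), Finset.sum_neg_distrib]
  rw [show n + 2 - 2 - 0 = n by omega]
  ring

lemma Tclosed : ∀ s : ℕ,
    5 * T (4*s + 4) = 3 * Nat.fib (4*s+4) - Nat.fib (4*s+5) + 1 ∧
    5 * T (4*s + 5) = 3 * Nat.fib (4*s+5) - Nat.fib (4*s+6) - 2 ∧
    5 * T (4*s + 6) = 3 * Nat.fib (4*s+6) - Nat.fib (4*s+7) - 1 ∧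
    5 * T (4*s + 7) = 3 * Nat.fib (4*s+7) - Nat.fib (4*s+8) + 2 := by
  intro s
  induction s with
  | zero => refine ⟨?_, ?_, ?_, ?_⟩ <;> decide
  | succ n ih =>
    obtain ⟨h1, h2, h3, h4⟩ := ih
    have e1 : 4 * (n+1) + 4 = (4*n + 6) + 2 := by ring
    have e2 : 4 * (n+1) + 5 = (4*n + 7) + 2 := by ring
    have e3 : 4 * (n+1) + 6 = (4*n + 6 + 2) + 2 := by ring
    have e4 : 4 * (n+1) + 7 = (4*n + 7 + 2) + 2 := by ring
    have f1 := Trec (4*n+6)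
    have f2 := Trec (4*n+7)
    have f3 := Trec (4*n+6+2)
    have f4 := Trec (4*n+7+2)
    have g : ∀ m, (Nat.fib (m+2) : ℤ) = Nat.fib (m+1) + Nat.fib m := by
      intro m; rw [Nat.fib_add_two]; push_cast; ring
    have g0 := g (4*n+4); have g1 := g (4*n+5); have g2 := g (4*n+6)
    have g3 := g (4*n+7); have g4 := g (4*n+8); have g5 := g (4*n+9); have g6 := g (4*n+10)
    ring_nf at h1 h2 h3 h4 f1 f2 f3 f4 g0 g1 g2 g3 g4 g5 g6
    refine ⟨?_, ?_, ?_, ?_⟩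
    · ring_nf; rw [f1]; omega
    · ring_nf; rw [f2]; omega
    · ring_nf; rw [f3, f1]; omega
    · ring_nf; rw [f4, f2]; omega

lemma sqrt5_sq : Real.sqrt 5 ^ 2 = 5 := Real.sq_sqrt (by norm_num)

lemma phi_sq : φ ^ 2 = φ + 1 := by
  rw [φ]; linear_combination sqrt5_sq / 4

lemma phi_pos : 0 < φ := by
  rw [φ]; positivity

lemma hK : Real.sqrt 5 * (φ + 2) = 5 * φ := by
  rw [φ]; linear_combination sqrt5_sq / 2

lemma psi_pow : ∀ n : ℕ, (1 - φ) ^ n = (Nat.fib (n+1) : ℝ) - φ * (Nat.fib n : ℝ) := by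
  intro n
  induction n with
  | zero => simp
  | succ m ih =>
    rw [pow_succ, ih, Nat.fib_add_two]
    push_cast
    linear_combination (Nat.fib m : ℝ) * phi_sq

lemma hdiv (n : ℕ) : (Nat.fib n : ℝ) / (φ + 2) = (3 * Nat.fib n - φ * Nat.fib n) / 5 := by
  have h2 : φ + 2 ≠ 0 := by have := phi_pos; intro h; linarith
  field_simp
  linear_combination (Nat.fib n : ℝ) * phi_sq

theorem T_error_formulas (t : ℕ) (ht : 1 ≤ t) :
    (T (4 * t) : ℝ) - (Nat.fib (4 * t) : ℝ) / (φ + 2)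
      = 1 / 5 + (1 - φ) ^ (4 * t - 1) / (Real.sqrt 5 * (φ + 2)) ∧
    (T (4 * t + 1) : ℝ) - (Nat.fib (4 * t + 1) : ℝ) / (φ + 2)
      = -2 / 5 + (2 - φ) * (1 - φ) ^ (4 * t - 2) / (Real.sqrt 5 * (φ + 2)) ∧
    (T (4 * t + 2) : ℝ) - (Nat.fib (4 * t + 2) : ℝ) / (φ + 2)
      = -1 / 5 + (3 - 2 * φ) * (1 - φ) ^ (4 * t - 2) / (Real.sqrt 5 * (φ + 2)) ∧
    (T (4 * t + 3) : ℝ) - (Nat.fib (4 * t + 3) : ℝ) / (φ + 2)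
      = 2 / 5 + (5 - 3 * φ) * (1 - φ) ^ (4 * t - 2) / (Real.sqrt 5 * (φ + 2)) := by
  obtain ⟨s, rfl⟩ : ∃ s, t = s + 1 := ⟨t - 1, by omega⟩
  simp only [show 4 * (s+1) = 4*s + 4 from by ring,
    show 4*s + 4 - 1 = 4*s + 3 from by omega,
    show 4*s + 4 - 2 = 4*s + 2 from by omega,
    show 4*s + 4 + 1 = 4*s + 5 from by omega,
    show 4*s + 4 + 2 = 4*s + 6 from by omega,
    show 4*s + 4 + 3 = 4*s + 7 from by omega]
  obtain ⟨h1, h2, h3, h4⟩ := Tclosed s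
  have c1 : (5:ℝ) * T (4*s+4) = 3 * Nat.fib (4*s+4) - Nat.fib (4*s+5) + 1 := by exact_mod_cast h1
  have c2 : (5:ℝ) * T (4*s+5) = 3 * Nat.fib (4*s+5) - Nat.fib (4*s+6) - 2 := by exact_mod_cast h2
  have c3 : (5:ℝ) * T (4*s+6) = 3 * Nat.fib (4*s+6) - Nat.fib (4*s+7) - 1 := by exact_mod_cast h3
  have c4 : (5:ℝ) * T (4*s+7) = 3 * Nat.fib (4*s+7) - Nat.fib (4*s+8) + 2 := by exact_mod_cast h4
  have fr : ∀ m : ℕ, (Nat.fib (m+2) : ℝ) = Nat.fib (m+1) + Nat.fib m := by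
    intro m; rw [Nat.fib_add_two]; push_cast; ring
  have fr1 : (Nat.fib (4*s+5) : ℝ) = Nat.fib (4*s+4) + Nat.fib (4*s+3) := fr (4*s+3)
  have fr2 : (Nat.fib (4*s+6) : ℝ) = Nat.fib (4*s+5) + Nat.fib (4*s+4) := fr (4*s+4)
  have fr3 : (Nat.fib (4*s+7) : ℝ) = Nat.fib (4*s+6) + Nat.fib (4*s+5) := fr (4*s+5)
  have fr4 : (Nat.fib (4*s+8) : ℝ) = Nat.fib (4*s+7) + Nat.fib (4*s+6) := fr (4*s+6)
  have hφ0 : φ ≠ 0 := ne_of_gt phi_pos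
  have p1 : (1 - φ) ^ (4*s+3) = (Nat.fib (4*s+4) : ℝ) - φ * Nat.fib (4*s+3) := psi_pow (4*s+3)
  have p2 : (1 - φ) ^ (4*s+2) = (Nat.fib (4*s+3) : ℝ) - φ * Nat.fib (4*s+2) := psi_pow (4*s+2)
  have fr0 : (Nat.fib (4*s+4) : ℝ) = Nat.fib (4*s+3) + Nat.fib (4*s+2) := fr (4*s+2)
  refine ⟨?_, ?_, ?_, ?_⟩
  · rw [hdiv, hK, p1]
    field_simp
    linear_combination (φ) * c1 + ((Nat.fib (4*s+4):ℝ)) * phi_sq - (φ) * fr1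
  · rw [hdiv, hK, p2]
    field_simp
    linear_combination (φ) * c2 - (φ) * fr2
      + (((Nat.fib (4*s+5):ℝ) - (Nat.fib (4*s+2):ℝ))) * phi_sq
      + fr1 + ((1-φ)) * fr0
  · rw [hdiv, hK, p2]
    field_simp
    linear_combination (φ) * c3 - (φ) * fr3
      + (((Nat.fib (4*s+6):ℝ) - 2*(Nat.fib (4*s+2):ℝ))) * phi_sq
      + fr2 + ((1-φ)) * fr1 + ((2-φ)) * fr0
  · rw [hdiv, hK, p2]
    field_simp
    linear_combination (φ) * c4 - (φ) * fr4
      + (((Nat.fib (4*s+7):ℝ) - 3*(Nat.fib (4*s+2):ℝ))) * phi_sq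
      + fr3 + ((1-φ)) * fr2 + ((2-φ)) * fr1 + ((3-2*φ)) * fr0
end
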